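/- arXiv:2102.07432 — 5 statements merged into one kernel-verified Lean document; each statement's English description precedes it below -/
import Mathlib

section
/- Let Λ(X) = ψ(X) X + λ ∇N(X) = (ψ(X) + λ(X X^T − I_p)) X with λ > 0, where ψ(X) is skew-symmetric. For X invertible, Λ(X) = 0 if and only if X X^T = I_p and ψ(X) = 0. -/
open Matrix

/-- Critical points of the landing field: for `X` invertible and `λ > 0`,
`Λ(X) = (ψ(X) + λ (X Xᵀ − I)) X = 0` iff `X Xᵀ = I` and `ψ(X) = 0`. -/
theorem stmt_7 (p : ℕ) (ψ : Matrix (Fin p) (Fin p) ℝ → Matrix (Fin p) (Fin p) ℝ)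
    (hψ : ∀ X, (ψ X)ᵀ = -ψ X) (lam : ℝ) (hlam : 0 < lam)
    (X : Matrix (Fin p) (Fin p) ℝ) (hX : IsUnit X) :
    (ψ X + lam • (X * Xᵀ - 1)) * X = 0 ↔ X * Xᵀ = 1 ∧ ψ X = 0 := by
  constructor
  · intro h
    obtain ⟨u, hu⟩ := hX
    have hA : ψ X + lam • (X * Xᵀ - 1) = 0 := by
      subst hu
      have h1 : ((↑u : Matrix (Fin p) (Fin p) ℝ) * (↑u : Matrix (Fin p) (Fin p) ℝ)⁻¹) = 1 :=
        Matrix.mul_nonsing_inv _ ((Matrix.isUnit_iff_isUnit_det _).mp u.isUnit)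
      have := congrArg (fun M => M * (↑u : Matrix (Fin p) (Fin p) ℝ)⁻¹) h
      simpa [mul_assoc, h1] using this
    have hS : (X * Xᵀ - 1)ᵀ = X * Xᵀ - 1 := by
      simp [Matrix.transpose_sub, Matrix.transpose_mul]
    have hψX : ψ X = -(lam • (X * Xᵀ - 1)) := by
      have := hA
      linear_combination (norm := abel) this
    have ht := congrArg Matrix.transpose hψX
    rw [hψ X, Matrix.transpose_neg, Matrix.transpose_smul, hS] at ht
    -- ht : -ψ X = -(lam • (X*Xᵀ-1)), and hψX : ψ X = -(lam • ...)
    have h2 : (2 * lam) • (X * Xᵀ - 1) = 0 := by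
      have : ψ X = lam • (X * Xᵀ - 1) := by
        have := congrArg Neg.neg ht; simpa using this
      rw [this] at hψX
      have : lam • (X * Xᵀ - 1) + lam • (X * Xᵀ - 1) = 0 := by
        nth_rewrite 1 [hψX]; abel
      rw [two_mul, add_smul]; exact this
    have hS0 : X * Xᵀ - 1 = 0 := by
      have hne : (2 * lam) ≠ 0 := by positivity
      exact (smul_eq_zero.mp h2).resolve_left hne
    have hXXt : X * Xᵀ = 1 := by
      have := hS0; linear_combination (norm := abel) this
    refine ⟨hXXt, ?_⟩
    rw [hψX, hS0]; simp
  · rintro ⟨h1, h2⟩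
    rw [h1, h2]; simp
end

section
/- For any p×p real matrix X, ‖(X X^T − I_p) X‖_F² ≥ N(X) − N(X)^{3/2}, where N(X) = ‖X X^T − I_p‖_F². -/
open Matrix

/-- Frobenius norm of a square real matrix. -/
noncomputable def frob {p : ℕ} (M : Matrix (Fin p) (Fin p) ℝ) : ℝ :=
  Real.sqrt (Matrix.trace (Mᵀ * M))

namespace Stmt9Aux

variable {p : ℕ}

/-- Sum of squares of entries. -/
noncomputable def S (M : Matrix (Fin p) (Fin p) ℝ) : ℝ := ∑ i, ∑ j, M i j ^ 2

lemma S_nonneg (M : Matrix (Fin p) (Fin p) ℝ) : 0 ≤ S M :=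
  Finset.sum_nonneg fun _ _ => Finset.sum_nonneg fun _ _ => sq_nonneg _

lemma trace_eq (M : Matrix (Fin p) (Fin p) ℝ) : Matrix.trace (Mᵀ * M) = S M := by
  simp only [Matrix.trace, Matrix.diag, Matrix.mul_apply, Matrix.transpose_apply, S, sq]
  exact Finset.sum_comm

lemma frob_sq (M : Matrix (Fin p) (Fin p) ℝ) : frob M ^ 2 = S M := by
  rw [frob, trace_eq, Real.sq_sqrt (S_nonneg M)]

lemma S_mul_le (A B : Matrix (Fin p) (Fin p) ℝ) : S (A * B) ≤ S A * S B := by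
  have h : ∀ i j, (A * B) i j ^ 2 ≤ (∑ k, A i k ^ 2) * ∑ k, B k j ^ 2 := by
    intro i j
    simpa [Matrix.mul_apply] using
      Finset.sum_mul_sq_le_sq_mul_sq Finset.univ (fun k => A i k) (fun k => B k j)
  calc S (A * B) ≤ ∑ i, ∑ j, (∑ k, A i k ^ 2) * ∑ k, B k j ^ 2 := by
        apply Finset.sum_le_sum; intro i _
        exact Finset.sum_le_sum fun j _ => h i j
    _ = (∑ i, ∑ k, A i k ^ 2) * ∑ j, ∑ k, B k j ^ 2 := by
        rw [← Finset.sum_mul_sum]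
    _ = S A * S B := by
        rw [S, S]; congr 1; exact Finset.sum_comm

lemma trace_eq' (Δ : Matrix (Fin p) (Fin p) ℝ) :
    Matrix.trace (Δᵀ * (Δ * Δ)) = ∑ i, ∑ j, Δ i j * (Δ * Δ) i j := by
  simp only [Matrix.trace, Matrix.diag, Matrix.mul_apply, Matrix.transpose_apply]
  rw [Finset.sum_comm]

lemma trace_cube_ge (Δ : Matrix (Fin p) (Fin p) ℝ) (hΔ : Δᵀ = Δ) :
    Matrix.trace (Δ * Δ * Δ) ≥ -(Real.sqrt (S Δ)) ^ 3 := by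
  set t := Matrix.trace (Δ * Δ * Δ) with ht
  have hexp : t = ∑ i, ∑ j, Δ i j * (Δ * Δ) i j := by
    have : t = Matrix.trace (Δᵀ * (Δ * Δ)) := by rw [hΔ, ← Matrix.mul_assoc]
    rw [this, trace_eq' Δ]
  -- Cauchy-Schwarz over the pair index
  have hcs : t ^ 2 ≤ S Δ * S (Δ * Δ) := by
    rw [hexp]
    have := Finset.sum_mul_sq_le_sq_mul_sq (Finset.univ : Finset (Fin p × Fin p))
      (fun q => Δ q.1 q.2) (fun q => (Δ * Δ) q.1 q.2)
    simpa [Fintype.sum_prod_type, S] using this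
  have hsub : S (Δ * Δ) ≤ S Δ * S Δ := S_mul_le Δ Δ
  have h2 : t ^ 2 ≤ (S Δ) ^ 3 := by nlinarith [S_nonneg Δ, S_nonneg (Δ * Δ)]
  have hs : Real.sqrt (S Δ) ^ 2 = S Δ := Real.sq_sqrt (S_nonneg Δ)
  set a := Real.sqrt (S Δ) with ha
  have h2' : t ^ 2 ≤ (a ^ 3) ^ 2 := by
    have : (a ^ 3) ^ 2 = S Δ ^ 3 := by rw [← hs]; ring
    linarith
  have ha3 : 0 ≤ a ^ 3 := pow_nonneg (Real.sqrt_nonneg _) 3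
  nlinarith [h2', ha3]

end Stmt9Aux

open Stmt9Aux in
/-- `‖(X Xᵀ − I) X‖_F² ≥ N(X) − N(X)^{3/2}` where `N(X) = ‖X Xᵀ − I‖_F²`. -/
theorem stmt_9 (p : ℕ) (X : Matrix (Fin p) (Fin p) ℝ) :
    frob ((X * Xᵀ - 1) * X) ^ 2 ≥
      frob (X * Xᵀ - 1) ^ 2 - (frob (X * Xᵀ - 1) ^ 2) ^ ((3:ℝ)/2) := by
  set Δ := X * Xᵀ - 1 with hΔdef
  have hΔsym : Δᵀ = Δ := by
    simp [hΔdef, Matrix.transpose_sub, Matrix.transpose_mul]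
  -- identity: trace ((ΔX)ᵀ (ΔX)) = S Δ + trace (Δ³)
  have hid : Matrix.trace ((Δ * X)ᵀ * (Δ * X)) = S Δ + Matrix.trace (Δ * Δ * Δ) := by
    have h1 : (Δ * X)ᵀ * (Δ * X) = Xᵀ * (Δ * (Δ * X)) := by
      rw [Matrix.transpose_mul, hΔsym, Matrix.mul_assoc]
    rw [h1, Matrix.trace_mul_comm]
    have h2 : Δ * (Δ * X) * Xᵀ = Δ * Δ * (X * Xᵀ) := by
      rw [Matrix.mul_assoc, Matrix.mul_assoc, Matrix.mul_assoc]
    have h3 : X * Xᵀ = Δ + 1 := by simp [hΔdef]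
    rw [h2, h3, Matrix.mul_add, Matrix.mul_one, Matrix.trace_add, ← trace_eq]
    rw [hΔsym]; ring
  have hfs : frob (Δ * X) ^ 2 = S Δ + Matrix.trace (Δ * Δ * Δ) := by
    rw [frob, Real.sq_sqrt, hid]
    · rw [trace_eq]; exact S_nonneg _
  have htr := trace_cube_ge Δ hΔsym
  have hfΔ : frob Δ ^ 2 = S Δ := frob_sq Δ
  have hfrobΔ : frob Δ = Real.sqrt (S Δ) := by rw [frob, trace_eq]
  have hrpow : (frob Δ ^ 2) ^ ((3:ℝ)/2) = frob Δ ^ 3 := by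
    have hf : (0:ℝ) ≤ frob Δ := Real.sqrt_nonneg _
    rw [← Real.rpow_natCast (frob Δ) 2, ← Real.rpow_natCast (frob Δ) 3,
      ← Real.rpow_mul hf]
    norm_num
  rw [hfs, hrpow, hfΔ, hfrobΔ, ge_iff_le]
  linarith
end

section
/- Let n : [0,∞) → [0,∞) be differentiable with n(0) = N_0 ∈ (0,1) and satisfying n'(t) ≤ −λ (n(t) − n(t)^{3/2}) for all t ≥ 0, with λ > 0. Then n(t) ≤ e^{−λ t} · N_0 / (√N_0 − 1)² for all t ≥ 0. -/
open Real Set Filter Topology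

noncomputable def gg : ℝ → ℝ := fun x => x / (1 - Real.sqrt x) ^ 2

lemma gg_hasDeriv {x : ℝ} (hx0 : 0 ≤ x) (hx1 : x < 1) :
    HasDerivAt gg (((1 - Real.sqrt x) ^ 3)⁻¹) x := by
  rcases eq_or_lt_of_le hx0 with h0 | h0
  · subst h0
    rw [hasDerivAt_iff_tendsto_slope]
    have h1 : Tendsto (fun y : ℝ => ((1 - Real.sqrt y) ^ 2)⁻¹) (𝓝 0) (𝓝 (((1 - Real.sqrt 0) ^ 3)⁻¹)) := by
      have hc : ContinuousAt (fun y : ℝ => ((1 - Real.sqrt y) ^ 2)⁻¹) 0 := by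
        exact ((continuous_const.sub Real.continuous_sqrt).pow 2).continuousAt.inv₀ (by simp)
      simpa [Real.sqrt_zero] using hc.tendsto
    refine (h1.mono_left nhdsWithin_le_nhds).congr' ?_
    filter_upwards [self_mem_nhdsWithin] with y hy
    have hy' : y ≠ 0 := hy
    have : slope gg 0 y = gg y / y := by
      simp [slope, gg, div_eq_inv_mul]
    rw [this]
    show ((1 - Real.sqrt y) ^ 2)⁻¹ = gg y / y
    rw [gg]
    rw [div_div, mul_comm, ← div_div, div_self hy', one_div]
  · have hsx : Real.sqrt x ≠ 0 := by positivity
    have hsx1 : Real.sqrt x < 1 := by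
      rwa [show (1:ℝ) = Real.sqrt 1 by simp, Real.sqrt_lt_sqrt_iff hx0]
    have hq : (1 - Real.sqrt x) ≠ 0 := by nlinarith [Real.sqrt_nonneg x]
    have hs : HasDerivAt Real.sqrt (1 / (2 * Real.sqrt x)) x := Real.hasDerivAt_sqrt (ne_of_gt h0)
    have hd : HasDerivAt (fun y => (1 - Real.sqrt y) ^ 2)
        (2 * (1 - Real.sqrt x) ^ 1 * (0 - 1 / (2 * Real.sqrt x))) x :=
      ((hasDerivAt_const x (1:ℝ)).sub hs).pow 2
    have hdiv := (hasDerivAt_id x).div hd (pow_ne_zero 2 hq)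
    convert hdiv using 1
    · rfl
    · rfl
    · rfl
    have hx2 : Real.sqrt x ^ 2 = x := Real.sq_sqrt hx0
    simp only [id_eq]
    field_simp
    nlinarith [hx2, Real.sqrt_nonneg x]

lemma gg_mono {x y : ℝ} (hx0 : 0 ≤ x) (hxy : x ≤ y) (hy1 : y < 1) : gg x ≤ gg y := by
  have hy0 : 0 ≤ y := le_trans hx0 hxy
  have hsy : Real.sqrt y < 1 := by
    rwa [show (1:ℝ) = Real.sqrt 1 by simp, Real.sqrt_lt_sqrt_iff hy0]
  have hsxy : Real.sqrt x ≤ Real.sqrt y := Real.sqrt_le_sqrt hxy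
  have h1 : 0 < (1 - Real.sqrt y) ^ 2 := pow_pos (by linarith) 2
  have h2 : (1 - Real.sqrt y) ^ 2 ≤ (1 - Real.sqrt x) ^ 2 := by
    have hsx0 : 0 ≤ Real.sqrt x := Real.sqrt_nonneg x
    nlinarith
  exact div_le_div₀ hy0 hxy h1 h2

lemma rpow_32 {x : ℝ} (hx : 0 ≤ x) : x ^ ((3:ℝ)/2) = x * Real.sqrt x := by
  rcases eq_or_lt_of_le hx with h | h
  · subst h; rw [Real.zero_rpow (by norm_num)]; simp
  · rw [show (3:ℝ)/2 = 1 + 1/2 by norm_num, Real.rpow_add h, Real.rpow_one,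
      ← Real.sqrt_eq_rpow]

/-- Scalar differential inequality: if `n(0) = N₀ ∈ (0,1)`, `n ≥ 0` on `[0,∞)`
and `n' ≤ −λ (n − n^{3/2})`, then `n(t) ≤ e^{−λt} N₀ / (√N₀ − 1)²`. -/
theorem stmt_11 (n n' : ℝ → ℝ) (lam N0 : ℝ) (hlam : 0 < lam)
    (hN0 : N0 ∈ Set.Ioo (0:ℝ) 1) (h0 : n 0 = N0)
    (hnonneg : ∀ t ≥ (0:ℝ), 0 ≤ n t)
    (hderiv : ∀ t ≥ (0:ℝ), HasDerivAt n (n' t) t)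
    (hineq : ∀ t ≥ (0:ℝ), n' t ≤ -lam * (n t - n t ^ ((3:ℝ)/2))) :
    ∀ t ≥ (0:ℝ), n t ≤ Real.exp (-lam * t) * N0 / (Real.sqrt N0 - 1) ^ 2 := by
  obtain ⟨hN0p, hN01⟩ := hN0
  have hsN0 : Real.sqrt N0 < 1 := by
    rwa [show (1:ℝ) = Real.sqrt 1 by simp, Real.sqrt_lt_sqrt_iff hN0p.le]
  have hsN0' : 0 < 1 - Real.sqrt N0 := by linarith
  set K := gg N0 with hK
  have hKpos : 0 < K := div_pos hN0p (pow_pos hsN0' 2)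
  set r := Real.sqrt (K + 1) with hr
  have hr1 : 1 ≤ r := by
    nlinarith [Real.sq_sqrt (show (0:ℝ) ≤ K + 1 by linarith), Real.sqrt_nonneg (K + 1)]
  have hr0 : 0 < 1 + r := by linarith
  set β := (r / (1 + r)) ^ 2 with hβ
  have hβ0 : 0 ≤ β := by positivity
  have hsβ : Real.sqrt β = r / (1 + r) := Real.sqrt_sq (by positivity)
  have hβ1 : β < 1 := by
    rw [hβ]
    have : r / (1 + r) < 1 := by rw [div_lt_one hr0]; linarith
    nlinarith [div_nonneg (by linarith : (0:ℝ) ≤ r) hr0.le]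
  have hggβ : gg β = K + 1 := by
    have hr2 : r ^ 2 = K + 1 := Real.sq_sqrt (by linarith)
    have h1 : 1 - r / (1 + r) = 1 / (1 + r) := by field_simp; ring
    have hne : (1 + r) ≠ 0 := ne_of_gt hr0
    rw [gg, hsβ, h1, hβ, div_pow, div_pow, one_pow]
    rw [div_div_div_cancel_right₀]
    · simpa using hr2
    all_goals positivity
  have hN0β : N0 < β := by
    by_contra h
    push_neg at h
    have := gg_mono hβ0 h hN01
    rw [hggβ, ← hK] at this
    linarith
  -- F and its derivative
  set F : ℝ → ℝ := fun u => Real.exp (lam * u) * gg (n u) with hF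
  have hFderiv : ∀ s, 0 ≤ s → n s < 1 →
      HasDerivAt F (Real.exp (lam * s) * lam * gg (n s)
        + Real.exp (lam * s) * (((1 - Real.sqrt (n s)) ^ 3)⁻¹ * n' s)) s := by
    intro s hs hs1
    have h1 : HasDerivAt (fun u => Real.exp (lam * u)) (Real.exp (lam * s) * lam) s := by
      have := ((hasDerivAt_id s).const_mul lam).exp
      simpa using this
    have h2 : HasDerivAt (fun u => gg (n u)) (((1 - Real.sqrt (n s)) ^ 3)⁻¹ * n' s) s :=
      (gg_hasDeriv (hnonneg s hs) hs1).comp s (hderiv s hs)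
    exact h1.mul h2
  have hderiv_nonpos : ∀ s, 0 ≤ s → n s < 1 → deriv F s ≤ 0 := by
    intro s hs hs1
    rw [(hFderiv s hs hs1).deriv]
    set x := n s with hx
    have hx0 : 0 ≤ x := hnonneg s hs
    have hsx1 : Real.sqrt x < 1 := by
      rwa [show (1:ℝ) = Real.sqrt 1 by simp, Real.sqrt_lt_sqrt_iff hx0]
    have hq : 0 < 1 - Real.sqrt x := by linarith
    have he : 0 < Real.exp (lam * s) := Real.exp_pos _
    have hn' : n' s ≤ -lam * (x * (1 - Real.sqrt x)) := by
      have := hineq s hs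
      rwa [rpow_32 hx0, show x - x * Real.sqrt x = x * (1 - Real.sqrt x) by ring] at this
    have hstep : ((1 - Real.sqrt x) ^ 3)⁻¹ * n' s
        ≤ ((1 - Real.sqrt x) ^ 3)⁻¹ * (-lam * (x * (1 - Real.sqrt x))) :=
      mul_le_mul_of_nonneg_left hn' (by positivity)
    have hkey : Real.exp (lam * s) * lam * gg x
        + Real.exp (lam * s) * (((1 - Real.sqrt x) ^ 3)⁻¹ * (-lam * (x * (1 - Real.sqrt x)))) = 0 := by
      rw [gg]
      field_simp
      ring
    nlinarith [mul_le_mul_of_nonneg_left hstep he.le]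
  -- antitone lemma
  have key : ∀ T, 0 ≤ T → (∀ s ∈ Icc (0:ℝ) T, n s < 1) → F T ≤ F 0 := by
    intro T hT hlt
    have hanti : AntitoneOn F (Icc 0 T) := by
      apply antitoneOn_of_deriv_nonpos (convex_Icc 0 T)
      · intro s hs
        exact ((hFderiv s hs.1 (hlt s hs)).continuousAt).continuousWithinAt
      · intro s hs
        rw [interior_Icc] at hs
        exact (hFderiv s hs.1.le (hlt s ⟨hs.1.le, hs.2.le⟩)).differentiableAt.differentiableWithinAt
      · intro s hs
        rw [interior_Icc] at hs
        exact hderiv_nonpos s hs.1.le (hlt s ⟨hs.1.le, hs.2.le⟩)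
    exact hanti (left_mem_Icc.2 hT) (right_mem_Icc.2 hT) hT
  -- barrier
  intro t ht
  have hbar : ∀ s ∈ Icc (0:ℝ) t, n s < β := by
    by_contra hcon
    push_neg at hcon
    obtain ⟨s0, hs0, hs0β⟩ := hcon
    set B : Set ℝ := {s | s ∈ Icc (0:ℝ) t ∧ β ≤ n s} with hB
    have hBne : B.Nonempty := ⟨s0, hs0, hs0β⟩
    have hBbdd : BddBelow B := ⟨0, fun s hs => hs.1.1⟩
    have hBclosed : IsClosed B := by
      rw [← isSeqClosed_iff_isClosed]
      intro u x hu hux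
      have hx : x ∈ Icc (0:ℝ) t :=
        isClosed_Icc.mem_of_tendsto hux (Filter.Eventually.of_forall fun k => (hu k).1)
      refine ⟨hx, ?_⟩
      have hc : ContinuousAt n x := (hderiv x hx.1).continuousAt
      exact ge_of_tendsto (hc.tendsto.comp hux) (Filter.Eventually.of_forall fun k => (hu k).2)
    set T := sInf B with hT
    have hTmem : T ∈ B := hBclosed.csInf_mem hBne hBbdd
    have hT0 : 0 < T := by
      rcases lt_or_eq_of_le hTmem.1.1 with h | h
      · exact h
      · exfalso; have := hTmem.2; rw [← h, h0] at this; linarith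
    have hless : ∀ s, 0 ≤ s → s < T → n s < β := by
      intro s hs hsT
      by_contra h
      push_neg at h
      have : s ∈ B := ⟨⟨hs, le_trans hsT.le hTmem.1.2⟩, h⟩
      exact absurd (csInf_le hBbdd this) (not_le.2 hsT)
    have hnT : n T = β := by
      refine le_antisymm ?_ hTmem.2
      have hc : ContinuousAt n T := (hderiv T hT0.le).continuousAt
      have htend : Tendsto n (𝓝[<] T) (𝓝 (n T)) := hc.tendsto.mono_left nhdsWithin_le_nhds
      have hev : ∀ᶠ s in 𝓝[<] T, n s ≤ β := by
        filter_upwards [Ioo_mem_nhdsLT_of_mem (⟨hT0, le_refl T⟩ : T ∈ Ioc 0 T)] with s hs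
        exact (hless s hs.1.le hs.2).le
      exact le_of_tendsto htend hev
    have hlt1 : ∀ s ∈ Icc (0:ℝ) T, n s < 1 := by
      intro s hs
      rcases lt_or_eq_of_le hs.2 with h | h
      · exact lt_trans (hless s hs.1 h) hβ1
      · rw [h, hnT]; exact hβ1
    have hFT : F T ≤ F 0 := key T hT0.le hlt1
    have hF0 : F 0 = K := by simp [hF, h0, hK]
    have hexp : 1 ≤ Real.exp (lam * T) := by
      rw [show (1:ℝ) = Real.exp 0 by simp]
      exact Real.exp_le_exp.2 (by positivity)
    have hggnT : 0 ≤ gg (n T) := by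
      rw [hnT, hggβ]; linarith
    have : gg (n T) ≤ K := by
      calc gg (n T) ≤ Real.exp (lam * T) * gg (n T) := le_mul_of_one_le_left hggnT hexp
        _ = F T := rfl
        _ ≤ F 0 := hFT
        _ = K := hF0
    rw [hnT, hggβ] at this
    linarith
  -- conclude
  have hFt : F t ≤ F 0 := key t ht (fun s hs => lt_trans (hbar s hs) hβ1)
  have hF0 : F 0 = K := by simp [hF, h0, hK]
  have hggn : gg (n t) ≤ Real.exp (-lam * t) * K := by
    have he : 0 < Real.exp (lam * t) := Real.exp_pos _
    have : Real.exp (lam * t) * gg (n t) ≤ K := by rw [← hF0]; exact hFt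
    rw [neg_mul, Real.exp_neg]
    rw [← le_div_iff₀' he] at this
    rwa [div_eq_inv_mul] at this
  have hnle : n t ≤ gg (n t) := by
    have hx0 : 0 ≤ n t := hnonneg t ht
    have hxβ : n t < β := hbar t ⟨ht, le_refl t⟩
    have hx1 : n t < 1 := lt_trans hxβ hβ1
    have hsx1 : Real.sqrt (n t) < 1 := by
      rwa [show (1:ℝ) = Real.sqrt 1 by simp, Real.sqrt_lt_sqrt_iff hx0]
    have hq : 0 < 1 - Real.sqrt (n t) := by linarith
    have hq1 : (1 - Real.sqrt (n t)) ^ 2 ≤ 1 := by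
      nlinarith [Real.sqrt_nonneg (n t)]
    rw [gg, le_div_iff₀ (by positivity)]
    nlinarith
  have hrhs : Real.exp (-lam * t) * N0 / (Real.sqrt N0 - 1) ^ 2 = Real.exp (-lam * t) * K := by
    rw [hK, gg, show (Real.sqrt N0 - 1) ^ 2 = (1 - Real.sqrt N0) ^ 2 by ring]
    rw [mul_div_assoc]
  rw [hrhs]
  exact le_trans hnle hggn
end

section
/- If a solution X(t) of the landing flow Ẋ = −(ψ(X) + λ(X X^T − I_p)) X starts at X_0 ∈ O_p, then X(t) ∈ O_p for all t ≥ 0, and the flow coincides with the Riemannian gradient flow Ẋ = −ψ(X) X. -/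
open Matrix

/-- If the landing flow starts on the orthogonal manifold, it stays on it, and
coincides with the Riemannian gradient flow `Ẋ = −ψ(X) X`. -/
theorem stmt_12 (p : ℕ)
    (ψ : Matrix (Fin p) (Fin p) ℝ → Matrix (Fin p) (Fin p) ℝ)
    (hψ : ∀ X, (ψ X)ᵀ = -ψ X) (lam : ℝ) (hlam : 0 < lam)
    (X : ℝ → Matrix (Fin p) (Fin p) ℝ)
    (hflow : ∀ t i j, HasDerivAt (fun s => X s i j)
      ((-((ψ (X t) + lam • (X t * (X t)ᵀ - 1)) * X t)) i j) t)
    (h0 : X 0 * (X 0)ᵀ = 1) :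
    ∀ t ≥ (0:ℝ), X t * (X t)ᵀ = 1 ∧
      (∀ i j, HasDerivAt (fun s => X s i j) ((-(ψ (X t) * X t)) i j) t) := by
  classical
  set N : ℝ → Matrix (Fin p) (Fin p) ℝ := fun s => X s * (X s)ᵀ - 1 with hN
  set A : ℝ → Matrix (Fin p) (Fin p) ℝ :=
    fun s => -((ψ (X s) + lam • (X s * (X s)ᵀ - 1)) * X s) with hA
  have hNT : ∀ s, (N s)ᵀ = N s := by
    intro s
    simp [hN, transpose_sub, transpose_mul, transpose_transpose]
  have hXXT : ∀ s, X s * (X s)ᵀ = N s + 1 := by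
    intro s; simp [hN]
  -- derivative of the matrix N entrywise
  have hNderiv : ∀ s i j, HasDerivAt (fun u => N u i j)
      ((A s * (X s)ᵀ + X s * (A s)ᵀ) i j) s := by
    intro s i j
    have h2 : HasDerivAt (fun u => ∑ k, X u i k * X u j k)
        (∑ k, ((A s) i k * X s j k + X s i k * (A s) j k)) s := by
      apply HasDerivAt.fun_sum
      intro k _
      exact (hflow s i k).mul (hflow s j k)
    have h3 : ((A s * (X s)ᵀ + X s * (A s)ᵀ) i j)
        = ∑ k, ((A s) i k * X s j k + X s i k * (A s) j k) := by
      simp [Matrix.add_apply, Matrix.mul_apply, Matrix.transpose_apply,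
        Finset.sum_add_distrib]
    rw [h3]
    have h4 : (fun u => N u i j) = fun u => (∑ k, X u i k * X u j k) - (1 : Matrix (Fin p) (Fin p) ℝ) i j := by
      funext u
      simp [hN, Matrix.sub_apply, Matrix.mul_apply, Matrix.transpose_apply]
    rw [h4]
    simpa using h2.sub_const ((1 : Matrix (Fin p) (Fin p) ℝ) i j)
  -- the matrix identity for the derivative of N
  have hM : ∀ s, A s * (X s)ᵀ + X s * (A s)ᵀ
      = N s * ψ (X s) - ψ (X s) * N s - (2*lam) • (N s * N s + N s) := by
    intro s
    have hAT : (A s)ᵀ = (X s)ᵀ * (ψ (X s) - lam • N s) := by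
      rw [hA]
      simp only [transpose_neg, transpose_mul, transpose_add, transpose_smul, hψ, hNT]
      rw [show (X s * (X s)ᵀ - 1)ᵀ = N s from hNT s]
      rw [mul_sub, mul_add]
      simp only [mul_neg, Matrix.mul_smul]
      abel
    rw [hAT, hA]
    simp only [neg_mul, mul_assoc]
    rw [hXXT s]
    rw [← mul_assoc (X s)]
    rw [hXXT s]
    simp only [mul_add, add_mul, mul_sub, sub_mul, mul_one, one_mul,
      smul_mul_assoc, mul_smul_comm, smul_add, smul_sub, smul_smul, two_mul, add_smul]
    abel
  -- sum of entrywise products as a trace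
  have trace_form : ∀ (B C : Matrix (Fin p) (Fin p) ℝ),
      ∑ i, ∑ j, B i j * C i j = trace (Bᵀ * C) := by
    intro B C
    simp only [Matrix.trace, Matrix.diag_apply, Matrix.mul_apply, Matrix.transpose_apply]
    rw [Finset.sum_comm]
  have htrnn : ∀ (B : Matrix (Fin p) (Fin p) ℝ), 0 ≤ trace (B * Bᵀ) := by
    intro B
    have h : trace (B * Bᵀ) = ∑ i, ∑ j, (B i j)^2 := by
      simp [Matrix.trace, Matrix.diag_apply, Matrix.mul_apply, sq]
    rw [h]
    positivity
  -- key trace identity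
  have htr : ∀ s, trace (N s * (A s * (X s)ᵀ + X s * (A s)ᵀ))
      = -((2*lam) * trace ((N s * X s) * (N s * X s)ᵀ)) := by
    intro s
    rw [hM s]
    have h1 : (N s * X s) * (N s * X s)ᵀ = N s * (N s * N s + N s) := by
      rw [transpose_mul, hNT]
      calc N s * X s * ((X s)ᵀ * N s) = N s * ((X s * (X s)ᵀ) * N s) := by
            simp [mul_assoc]
        _ = N s * (N s * N s + N s) := by rw [hXXT]; noncomm_ring
    rw [h1]
    rw [mul_sub, mul_sub, trace_sub, trace_sub, Matrix.mul_smul, trace_smul]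
    have h2 : trace (N s * (ψ (X s) * N s)) = trace (N s * (N s * ψ (X s))) := by
      rw [← mul_assoc, Matrix.trace_mul_comm]
    rw [h2]
    simp [smul_eq_mul]
  -- the Lyapunov function
  set n : ℝ → ℝ := fun u => ∑ i, ∑ j, (N u i j)^2 with hn
  have hnderiv : ∀ s, HasDerivAt n (-((4*lam) * trace ((N s * X s) * (N s * X s)ᵀ))) s := by
    intro s
    have h1 : HasDerivAt n (∑ i, ∑ j, 2 * N s i j * ((A s * (X s)ᵀ + X s * (A s)ᵀ) i j)) s := by
      apply HasDerivAt.fun_sum; intro i _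
      apply HasDerivAt.fun_sum; intro j _
      have := (hNderiv s i j).fun_pow 2
      simpa using this
    have e1 : ∑ i, ∑ j, 2 * N s i j * ((A s * (X s)ᵀ + X s * (A s)ᵀ) i j)
        = -((4*lam) * trace ((N s * X s) * (N s * X s)ᵀ)) := by
      have e2 : ∑ i, ∑ j, 2 * N s i j * ((A s * (X s)ᵀ + X s * (A s)ᵀ) i j)
          = 2 * ∑ i, ∑ j, N s i j * ((A s * (X s)ᵀ + X s * (A s)ᵀ) i j) := by
        rw [Finset.mul_sum]
        congr 1
        funext i
        rw [Finset.mul_sum]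
        congr 1
        funext j
        ring
      rw [e2, trace_form, hNT, htr]
      ring
    rw [← e1]
    exact h1
  have hmono : AntitoneOn n (Set.Ici (0:ℝ)) := by
    apply antitoneOn_of_deriv_nonpos (convex_Ici 0)
    · exact fun s _ => (hnderiv s).continuousAt.continuousWithinAt
    · exact fun s _ => (hnderiv s).differentiableAt.differentiableWithinAt
    · intro s _
      rw [(hnderiv s).deriv]
      have := htrnn (N s * X s)
      nlinarith
  have key : ∀ t, 0 ≤ t → X t * (X t)ᵀ = 1 := by
    intro t ht
    have h00 : n 0 = 0 := by
      simp [hn, hN, h0]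
    have hle : n t ≤ 0 := by
      have := hmono Set.self_mem_Ici (Set.mem_Ici.mpr ht) ht
      rwa [h00] at this
    have hge : 0 ≤ n t := by
      apply Finset.sum_nonneg
      intro i _
      exact Finset.sum_nonneg fun j _ => sq_nonneg _
    have hnt : n t = 0 := le_antisymm hle hge
    have hNt : N t = 0 := by
      ext i j
      have h1 := (Finset.sum_eq_zero_iff_of_nonneg
        (fun i _ => Finset.sum_nonneg (fun j _ => sq_nonneg (N t i j)))).mp hnt
      have h2 := (Finset.sum_eq_zero_iff_of_nonneg
        (fun j _ => sq_nonneg (N t i j))).mp (h1 i (Finset.mem_univ i)) j (Finset.mem_univ j)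
      have := (pow_eq_zero_iff two_ne_zero).mp h2
      simpa using this
    have : X t * (X t)ᵀ - 1 = 0 := hNt
    exact sub_eq_zero.mp this
  intro t ht
  have hort := key t ht
  refine ⟨hort, fun i j => ?_⟩
  have h := hflow t i j
  rw [hort] at h
  simpa using h
end

section
/- Along the landing flow Ẋ = −Λ(X) with Λ(X) = (ψ(X) + λ(X X^T − I_p))X, the function n(t) = N(X(t)) satisfies n'(t) = −λ ‖(X X^T − I_p) X‖_F² ≤ 0; in particular N(X(t)) is non-increasing. -/
open Matrix

lemma trace_eq_sum {p : ℕ} (M : Matrix (Fin p) (Fin p) ℝ) :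
    Matrix.trace (Mᵀ * M) = ∑ j, ∑ i, (M i j) ^ 2 := by
  simp [Matrix.trace, Matrix.mul_apply, Matrix.diag, sq]

lemma trace_nonneg' {p : ℕ} (M : Matrix (Fin p) (Fin p) ℝ) :
    0 ≤ Matrix.trace (Mᵀ * M) := by
  rw [trace_eq_sum]
  positivity

lemma frob_sq {p : ℕ} (M : Matrix (Fin p) (Fin p) ℝ) :
    frob M ^ 2 = Matrix.trace (Mᵀ * M) :=
  Real.sq_sqrt (trace_nonneg' M)

lemma sum_mul_eq_trace {p : ℕ} (A B : Matrix (Fin p) (Fin p) ℝ) :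
    ∑ j, ∑ i, A i j * B i j = Matrix.trace (Aᵀ * B) := by
  simp [Matrix.trace, Matrix.mul_apply, Matrix.diag]

lemma trace_skew_symm {p : ℕ} (ψ S : Matrix (Fin p) (Fin p) ℝ)
    (hψ : ψᵀ = -ψ) (hS : Sᵀ = S) : Matrix.trace (ψ * S) = 0 := by
  have h : Matrix.trace (ψ * S) = -Matrix.trace (ψ * S) := by
    conv_lhs => rw [← Matrix.trace_transpose (ψ * S)]
    rw [Matrix.transpose_mul, hψ, hS, Matrix.mul_neg, Matrix.trace_neg,
      Matrix.trace_mul_comm]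
  linarith

lemma key_trace {p : ℕ} (Xt ψt : Matrix (Fin p) (Fin p) ℝ)
    (hψ : ψtᵀ = -ψt) (lam : ℝ) :
    Matrix.trace ((Xt * Xtᵀ - 1)ᵀ *
      ((-((ψt + lam • (Xt * Xtᵀ - 1)) * Xt)) * Xtᵀ +
        Xt * (-((ψt + lam • (Xt * Xtᵀ - 1)) * Xt))ᵀ)) =
    -(2 * lam) * Matrix.trace (((Xt * Xtᵀ - 1) * Xt)ᵀ * ((Xt * Xtᵀ - 1) * Xt)) := by
  set S := Xt * Xtᵀ with hS
  set E := S - 1 with hE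
  set D := -((ψt + lam • E) * Xt) with hD
  have hSt : Sᵀ = S := by rw [hS, Matrix.transpose_mul, Matrix.transpose_transpose]
  have hEt : Eᵀ = E := by rw [hE, Matrix.transpose_sub, hSt, Matrix.transpose_one]
  have h2 : Matrix.trace (E * (Xt * Dᵀ)) = Matrix.trace (E * (D * Xtᵀ)) := by
    conv_lhs => rw [← Matrix.trace_transpose]
    rw [Matrix.transpose_mul, Matrix.transpose_mul, Matrix.transpose_transpose, hEt,
      Matrix.trace_mul_comm]
  have h1 : Matrix.trace (E * (D * Xtᵀ)) = -(lam * Matrix.trace ((E * Xt)ᵀ * (E * Xt))) := by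
    have hSE : (S * E)ᵀ = S * E := by
      rw [Matrix.transpose_mul, hEt, hSt, hE, Matrix.sub_mul, Matrix.mul_sub,
        Matrix.one_mul, Matrix.mul_one]
    have hskew : Matrix.trace (ψt * (S * E)) = 0 := trace_skew_symm ψt (S * E) hψ hSE
    have expand : E * (D * Xtᵀ)
        = -(E * (ψt * (Xt * Xtᵀ))) - lam • (E * (E * (Xt * Xtᵀ))) := by
      rw [hD]
      simp only [Matrix.add_mul, Matrix.smul_mul, Matrix.neg_mul, Matrix.mul_neg,
        Matrix.mul_add, Matrix.mul_smul, neg_add, ← sub_eq_add_neg, Matrix.sub_mul, Matrix.mul_sub, Matrix.mul_assoc]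
    have tr1 : Matrix.trace (E * (ψt * (Xt * Xtᵀ))) = 0 := by
      rw [← hS, Matrix.trace_mul_comm, Matrix.mul_assoc]
      exact hskew
    have tr2 : Matrix.trace (E * (E * (Xt * Xtᵀ)))
        = Matrix.trace ((E * Xt)ᵀ * (E * Xt)) := by
      rw [Matrix.transpose_mul, hEt,
        show E * (E * (Xt * Xtᵀ)) = (E * (E * Xt)) * Xtᵀ by simp [Matrix.mul_assoc],
        Matrix.trace_mul_comm, Matrix.mul_assoc]
    rw [expand, Matrix.trace_sub, Matrix.trace_neg, tr1, Matrix.trace_smul, tr2]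
    simp
  calc Matrix.trace (Eᵀ * (D * Xtᵀ + Xt * Dᵀ))
      = Matrix.trace (E * (D * Xtᵀ)) + Matrix.trace (E * (Xt * Dᵀ)) := by
        rw [hEt, Matrix.mul_add, Matrix.trace_add]
    _ = -(2 * lam) * Matrix.trace ((E * Xt)ᵀ * (E * Xt)) := by rw [h2, h1]; ring

/-- Along the landing flow, `n(t) = N(X(t))` satisfies
`n'(t) = −λ ‖(X Xᵀ − I) X‖_F² ≤ 0`; in particular `N(X(t))` is non-increasing. -/
theorem stmt_13 (p : ℕ)
    (ψ : Matrix (Fin p) (Fin p) ℝ → Matrix (Fin p) (Fin p) ℝ)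
    (hψ : ∀ X, (ψ X)ᵀ = -ψ X) (lam : ℝ) (hlam : 0 < lam)
    (X : ℝ → Matrix (Fin p) (Fin p) ℝ)
    (hflow : ∀ t i j, HasDerivAt (fun s => X s i j)
      ((-((ψ (X t) + lam • (X t * (X t)ᵀ - 1)) * X t)) i j) t) :
    (∀ t, HasDerivAt (fun s => (1/4 : ℝ) * frob (X s * (X s)ᵀ - 1) ^ 2)
      (-lam * frob ((X t * (X t)ᵀ - 1) * X t) ^ 2) t) ∧
    (∀ t, -lam * frob ((X t * (X t)ᵀ - 1) * X t) ^ 2 ≤ 0) ∧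
    Antitone (fun t => (1/4 : ℝ) * frob (X t * (X t)ᵀ - 1) ^ 2) := by
  have hfun : (fun s => (1/4 : ℝ) * frob (X s * (X s)ᵀ - 1) ^ 2)
      = fun s => (1/4 : ℝ) * ∑ j, ∑ i, ((X s * (X s)ᵀ - 1) i j) ^ 2 := by
    funext s; rw [frob_sq, trace_eq_sum]
  have hderiv : ∀ t, HasDerivAt (fun s => (1/4 : ℝ) * frob (X s * (X s)ᵀ - 1) ^ 2)
      (-lam * frob ((X t * (X t)ᵀ - 1) * X t) ^ 2) t := by
    intro t
    set D := -((ψ (X t) + lam • (X t * (X t)ᵀ - 1)) * X t) with hD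
    have hE : ∀ i j, HasDerivAt (fun s => (X s * (X s)ᵀ - 1) i j)
        ((D * (X t)ᵀ + X t * Dᵀ) i j) t := by
      intro i j
      have h : HasDerivAt (fun s => (∑ k, X s i k * X s j k) - (1 : Matrix (Fin p) (Fin p) ℝ) i j)
          (∑ k, ((D i k) * X t j k + X t i k * (D j k))) t := by
        exact (HasDerivAt.fun_sum fun k _ => (hflow t i k).fun_mul (hflow t j k)).sub_const _
      have heq : (fun s => (X s * (X s)ᵀ - 1) i j)
          = fun s => (∑ k, X s i k * X s j k) - (1 : Matrix (Fin p) (Fin p) ℝ) i j := by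
        funext s; simp [Matrix.sub_apply, Matrix.mul_apply]
      rw [heq]
      convert h using 1
      simp [Matrix.add_apply, Matrix.mul_apply, Matrix.transpose_apply,
        Finset.sum_add_distrib]
    have h : HasDerivAt (fun s => (1/4 : ℝ) * ∑ j, ∑ i, ((X s * (X s)ᵀ - 1) i j) ^ 2)
        ((1/4 : ℝ) * ∑ j, ∑ i,
          ((2 : ℕ) : ℝ) * ((X t * (X t)ᵀ - 1) i j) ^ 1 * ((D * (X t)ᵀ + X t * Dᵀ) i j)) t :=
      (HasDerivAt.fun_sum fun j _ => HasDerivAt.fun_sum fun i _ => (hE i j).fun_pow 2).const_mul _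
    rw [hfun]
    convert h using 1
    have hsum : ∑ j, ∑ i, ((2 : ℕ) : ℝ) * ((X t * (X t)ᵀ - 1) i j) ^ 1 * ((D * (X t)ᵀ + X t * Dᵀ) i j)
        = 2 * Matrix.trace ((X t * (X t)ᵀ - 1)ᵀ * (D * (X t)ᵀ + X t * Dᵀ)) := by
      rw [← sum_mul_eq_trace, Finset.mul_sum]
      refine Finset.sum_congr rfl fun j _ => ?_
      rw [Finset.mul_sum]
      refine Finset.sum_congr rfl fun i _ => ?_
      push_cast
      ring
    rw [hsum, hD, key_trace (X t) (ψ (X t)) (hψ (X t)) lam, frob_sq]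
    ring
  refine ⟨hderiv, fun t => ?_, ?_⟩
  · have h0 : (0:ℝ) ≤ frob ((X t * (X t)ᵀ - 1) * X t) ^ 2 := sq_nonneg _
    nlinarith
  · apply antitone_of_deriv_nonpos
    · exact fun t => (hderiv t).differentiableAt
    · intro t
      rw [(hderiv t).deriv]
      have h0 : (0:ℝ) ≤ frob ((X t * (X t)ᵀ - 1) * X t) ^ 2 := sq_nonneg _
      nlinarith
end
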